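/- For every fixed 𝐱 ∈ ℝ³ the function z ↦ Δ_{+,λ}(z,𝐱) is an entire analytic function on ℂ, i.e. it is complex differentiable at every z ∈ ℂ. -/

import Mathlib

open Real MeasureTheory
open scoped RealInnerProductSpace

noncomputable section

/-- ω(p) = √(|p|² + m²) -/
def freqOmega (m : ℝ) (p : EuclideanSpace ℝ (Fin 3)) : ℝ := Real.sqrt (‖p‖ ^ 2 + m ^ 2)

/-- The modified two-point function Δ_{+,λ}(z,x) for complex time z. -/
def DeltaPlusLam (m lam : ℝ) (z : ℂ) (x : EuclideanSpace ℝ (Fin 3)) : ℂ :=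
  ((2 * π : ℂ) ^ 3)⁻¹ * ∫ p : EuclideanSpace ℝ (Fin 3),
    ((2 * freqOmega m p : ℝ) : ℂ)⁻¹ * (Real.exp (-lam ^ 2 * (2 * ‖p‖ ^ 2 + m ^ 2)) : ℂ) *
      Complex.exp (-Complex.I * ((freqOmega m p : ℂ) * z - (⟪p, x⟫ : ℝ)))

/-- The integrand of `DeltaPlusLam`. -/
def auxF (m lam : ℝ) (x : EuclideanSpace ℝ (Fin 3)) (z : ℂ)
    (p : EuclideanSpace ℝ (Fin 3)) : ℂ :=
  ((2 * freqOmega m p : ℝ) : ℂ)⁻¹ * (Real.exp (-lam ^ 2 * (2 * ‖p‖ ^ 2 + m ^ 2)) : ℂ) *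
    Complex.exp (-Complex.I * ((freqOmega m p : ℂ) * z - (⟪p, x⟫ : ℝ)))

end

lemma freqOmega_ge {m : ℝ} (hm : 0 < m) (p : EuclideanSpace ℝ (Fin 3)) : m ≤ freqOmega m p := by
  have h : m = Real.sqrt (m ^ 2) := by rw [Real.sqrt_sq hm.le]
  rw [freqOmega]
  nlinarith [Real.sqrt_le_sqrt (show m ^ 2 ≤ ‖p‖ ^ 2 + m ^ 2 by nlinarith [sq_nonneg ‖p‖]), h]

lemma freqOmega_pos {m : ℝ} (hm : 0 < m) (p : EuclideanSpace ℝ (Fin 3)) : 0 < freqOmega m p :=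
  lt_of_lt_of_le hm (freqOmega_ge hm p)

lemma freqOmega_le {m : ℝ} (hm : 0 < m) (p : EuclideanSpace ℝ (Fin 3)) :
    freqOmega m p ≤ ‖p‖ + m := by
  rw [freqOmega]
  have h : ‖p‖ ^ 2 + m ^ 2 ≤ (‖p‖ + m) ^ 2 := by nlinarith [norm_nonneg p, hm.le]
  calc Real.sqrt (‖p‖ ^ 2 + m ^ 2) ≤ Real.sqrt ((‖p‖ + m) ^ 2) := Real.sqrt_le_sqrt h
    _ = ‖p‖ + m := Real.sqrt_sq (by positivity)

lemma freqOmega_continuous (m : ℝ) : Continuous (freqOmega m) :=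
  Real.continuous_sqrt.comp (by continuity)

lemma norm_cexp_aux (w c : ℝ) (z : ℂ) :
    ‖Complex.exp (-Complex.I * ((w : ℂ) * z - (c : ℝ)))‖ = Real.exp (w * z.im) := by
  rw [Complex.norm_exp]
  congr 1
  simp [Complex.mul_re, Complex.mul_im]

lemma norm_auxF {m : ℝ} (lam : ℝ) (hm : 0 < m) (x : EuclideanSpace ℝ (Fin 3)) (z : ℂ)
    (p : EuclideanSpace ℝ (Fin 3)) :
    ‖auxF m lam x z p‖ = (2 * freqOmega m p)⁻¹ *
      Real.exp (-lam ^ 2 * (2 * ‖p‖ ^ 2 + m ^ 2)) * Real.exp (freqOmega m p * z.im) := by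
  have h2 : (0:ℝ) < 2 * freqOmega m p := by
    have := freqOmega_pos hm p; linarith
  rw [auxF, norm_mul, norm_mul, norm_cexp_aux]
  rw [norm_inv, Complex.norm_real, Complex.norm_real, Real.norm_eq_abs, Real.norm_eq_abs,
    abs_of_pos h2, abs_of_pos (Real.exp_pos _)]

lemma auxF_continuous {m : ℝ} (lam : ℝ) (hm : 0 < m) (x : EuclideanSpace ℝ (Fin 3)) (z : ℂ) :
    Continuous (auxF m lam x z) := by
  apply Continuous.mul
  · apply Continuous.mul
    · refine (Complex.continuous_ofReal.comp (continuous_const.mul (freqOmega_continuous m))).inv₀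
        (fun p => ?_)
      have := freqOmega_pos hm p
      simp only [Function.comp_apply]
      exact_mod_cast ne_of_gt (show (0:ℝ) < 2 * freqOmega m p by linarith)
    · exact Complex.continuous_ofReal.comp (by continuity)
  · apply Complex.continuous_exp.comp
    apply Continuous.mul continuous_const
    apply Continuous.sub
    · exact (Complex.continuous_ofReal.comp (freqOmega_continuous m)).mul continuous_const
    · exact Complex.continuous_ofReal.comp (continuous_id.inner continuous_const)

lemma auxF_hasDerivAt (m lam : ℝ) (x : EuclideanSpace ℝ (Fin 3))
    (p : EuclideanSpace ℝ (Fin 3)) (z : ℂ) :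
    HasDerivAt (fun z => auxF m lam x z p)
      (auxF m lam x z p * (-Complex.I * (freqOmega m p : ℂ))) z := by
  have h1 : HasDerivAt (fun z : ℂ => -Complex.I * ((freqOmega m p : ℂ) * z - ((⟪p, x⟫ : ℝ) : ℂ)))
      (-Complex.I * (freqOmega m p : ℂ)) z := by
    simpa using (((hasDerivAt_id z).const_mul ((freqOmega m p : ℂ))).sub_const
      ((⟪p, x⟫ : ℝ) : ℂ)).const_mul (-Complex.I)
  have h2 := (h1.cexp).const_mul
    (((2 * freqOmega m p : ℝ) : ℂ)⁻¹ * (Real.exp (-lam ^ 2 * (2 * ‖p‖ ^ 2 + m ^ 2)) : ℂ))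
  refine h2.congr_deriv ?_
  exact (mul_assoc _ _ _).symm

lemma gauss_integrable {lam : ℝ} (hlam : 0 < lam) :
    Integrable (fun p : EuclideanSpace ℝ (Fin 3) => Real.exp (-lam ^ 2 * ‖p‖ ^ 2)) := by
  have h := (GaussianFourier.integrable_cexp_neg_mul_sq_norm_add
    (V := EuclideanSpace ℝ (Fin 3)) (b := ((lam ^ 2 : ℝ) : ℂ))
    (by rw [Complex.ofReal_re]; positivity) 0 0).norm
  refine h.congr (Filter.Eventually.of_forall fun p => ?_)
  simp only [Complex.norm_exp]
  congr 1
  simp [Complex.add_re, Complex.mul_re, Complex.ofReal_re, Complex.ofReal_im, ← Complex.ofReal_pow]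

theorem stmt_11 (m lam : ℝ) (hm : 0 < m) (hlam : 0 < lam)
    (x : EuclideanSpace ℝ (Fin 3)) :
    Differentiable ℂ (fun z : ℂ => DeltaPlusLam m lam z x) := by
  have main : Differentiable ℂ
      (fun z : ℂ => ∫ p : EuclideanSpace ℝ (Fin 3), auxF m lam x z p) := by
    intro z₀
    set R : ℝ := |z₀.im| + 1 with hRdef
    have hR0 : (0:ℝ) ≤ R := by positivity
    set K : ℝ := (2 * m)⁻¹ * (1 + m) * Real.exp (m * R) * Real.exp ((R + 1) ^ 2 / (4 * lam ^ 2))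
      with hKdef
    set bound : EuclideanSpace ℝ (Fin 3) → ℝ :=
      fun p => K * Real.exp (-lam ^ 2 * ‖p‖ ^ 2) with hbdef
    have hbound_nonneg : ∀ p, 0 ≤ bound p := fun p => by
      rw [hbdef, hKdef]; positivity
    have keyexp : ∀ t : ℝ, 0 ≤ t →
        (t + m) * Real.exp ((t + m) * R) * Real.exp (-(2 * lam ^ 2) * t ^ 2) ≤
          (1 + m) * Real.exp (m * R) * Real.exp ((R + 1) ^ 2 / (4 * lam ^ 2)) *
            Real.exp (-lam ^ 2 * t ^ 2) := by
      intro t ht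
      have h1 : t + m ≤ (1 + m) * Real.exp t := by
        nlinarith [Real.add_one_le_exp t, hm.le, ht]
      have h3 : (R + 1) * t - lam ^ 2 * t ^ 2 ≤ (R + 1) ^ 2 / (4 * lam ^ 2) := by
        rw [le_div_iff₀ (by positivity : (0:ℝ) < 4 * lam ^ 2)]
        nlinarith [sq_nonneg ((R + 1) - 2 * lam ^ 2 * t)]
      calc (t + m) * Real.exp ((t + m) * R) * Real.exp (-(2 * lam ^ 2) * t ^ 2)
          ≤ ((1 + m) * Real.exp t) * Real.exp ((t + m) * R) *
              Real.exp (-(2 * lam ^ 2) * t ^ 2) :=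
            mul_le_mul_of_nonneg_right
              (mul_le_mul_of_nonneg_right h1 (Real.exp_pos _).le) (Real.exp_pos _).le
        _ = (1 + m) * Real.exp (m * R) *
              Real.exp ((R + 1) * t - lam ^ 2 * t ^ 2) * Real.exp (-lam ^ 2 * t ^ 2) := by
            rw [mul_assoc, mul_assoc, ← Real.exp_add, ← Real.exp_add, mul_assoc, mul_assoc,
              ← Real.exp_add, ← Real.exp_add]
            congr 2
            ring
        _ ≤ (1 + m) * Real.exp (m * R) *
              Real.exp ((R + 1) ^ 2 / (4 * lam ^ 2)) * Real.exp (-lam ^ 2 * t ^ 2) :=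
            mul_le_mul_of_nonneg_right
              (mul_le_mul_of_nonneg_left (Real.exp_le_exp.2 h3) (by positivity))
              (Real.exp_pos _).le
    have hb1 : ∀ z ∈ Metric.ball z₀ 1, ∀ p : EuclideanSpace ℝ (Fin 3),
        ‖auxF m lam x z p * (-Complex.I * (freqOmega m p : ℂ))‖ ≤ bound p := by
      intro z hz p
      have him : z.im ≤ R := by
        have h1 : |z.im - z₀.im| ≤ ‖z - z₀‖ := by
          simpa using Complex.abs_im_le_norm (z - z₀)
        have h2 : ‖z - z₀‖ < 1 := by
          simpa [Complex.dist_eq] using Metric.mem_ball.1 hz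
        have h3 := (abs_le.1 (h1.trans h2.le)).2
        have := le_abs_self z₀.im
        rw [hRdef]; linarith
      have hωpos := freqOmega_pos hm p
      have hωle := freqOmega_le hm p
      have hωge := freqOmega_ge hm p
      have hnω : ‖-Complex.I * ((freqOmega m p : ℝ) : ℂ)‖ = freqOmega m p := by
        simp [abs_of_pos hωpos]
      rw [norm_mul, hnω, norm_auxF lam hm]
      calc (2 * freqOmega m p)⁻¹ * Real.exp (-lam ^ 2 * (2 * ‖p‖ ^ 2 + m ^ 2)) *
            Real.exp (freqOmega m p * z.im) * freqOmega m p
          ≤ (2 * m)⁻¹ * Real.exp (-(2 * lam ^ 2) * ‖p‖ ^ 2) *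
              Real.exp ((‖p‖ + m) * R) * (‖p‖ + m) := by
            have e1 : (2 * freqOmega m p)⁻¹ ≤ (2 * m)⁻¹ := by
              apply inv_anti₀ (by positivity)
              linarith
            have e2 : Real.exp (-lam ^ 2 * (2 * ‖p‖ ^ 2 + m ^ 2)) ≤
                Real.exp (-(2 * lam ^ 2) * ‖p‖ ^ 2) :=
              Real.exp_le_exp.2 (by nlinarith [sq_nonneg (lam * m)])
            have e3 : Real.exp (freqOmega m p * z.im) ≤ Real.exp ((‖p‖ + m) * R) :=
              Real.exp_le_exp.2 (by nlinarith [mul_le_mul_of_nonneg_left him hωpos.le,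
                mul_le_mul_of_nonneg_right hωle hR0])
            exact mul_le_mul
              (mul_le_mul (mul_le_mul e1 e2 (Real.exp_pos _).le (by positivity)) e3
                (Real.exp_pos _).le (by positivity))
              hωle hωpos.le (by positivity)
        _ = (2 * m)⁻¹ * ((‖p‖ + m) * Real.exp ((‖p‖ + m) * R) *
              Real.exp (-(2 * lam ^ 2) * ‖p‖ ^ 2)) := by ring
        _ ≤ (2 * m)⁻¹ * ((1 + m) * Real.exp (m * R) *
              Real.exp ((R + 1) ^ 2 / (4 * lam ^ 2)) * Real.exp (-lam ^ 2 * ‖p‖ ^ 2)) :=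
            mul_le_mul_of_nonneg_left (keyexp ‖p‖ (norm_nonneg p)) (by positivity)
        _ = bound p := by rw [hbdef, hKdef]; ring
    have hFmeas : ∀ᶠ z in nhds z₀, AEStronglyMeasurable (auxF m lam x z) volume :=
      Filter.Eventually.of_forall fun z => (auxF_continuous lam hm x z).aestronglyMeasurable
    have hFint : Integrable (auxF m lam x z₀) := by
      refine Integrable.mono' (((gauss_integrable hlam).const_mul K).const_mul m⁻¹)
        (auxF_continuous lam hm x z₀).aestronglyMeasurable
        (Filter.Eventually.of_forall fun p => ?_)
      have h := hb1 z₀ (Metric.mem_ball_self one_pos) p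
      rw [norm_mul] at h
      have hnω : ‖-Complex.I * ((freqOmega m p : ℝ) : ℂ)‖ = freqOmega m p := by
        simp [abs_of_pos (freqOmega_pos hm p)]
      rw [hnω] at h
      have hb' : bound p = K * Real.exp (-lam ^ 2 * ‖p‖ ^ 2) := by rw [hbdef]
      rw [hb'] at h
      nlinarith [freqOmega_ge hm p, norm_nonneg (auxF m lam x z₀ p),
        mul_inv_cancel₀ hm.ne', inv_pos.2 hm, hbound_nonneg p, hb']
    have hF'meas : AEStronglyMeasurable
        (fun p => auxF m lam x z₀ p * (-Complex.I * (freqOmega m p : ℂ))) volume :=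
      ((auxF_continuous lam hm x z₀).mul
        (continuous_const.mul
          (Complex.continuous_ofReal.comp (freqOmega_continuous m)))).aestronglyMeasurable
    have hlip : ∀ᵐ p : EuclideanSpace ℝ (Fin 3) ∂volume,
        LipschitzOnWith (Real.nnabs (bound p)) (fun z => auxF m lam x z p)
          (Metric.ball z₀ 1) := by
      refine Filter.Eventually.of_forall fun p => ?_
      refine (convex_ball z₀ 1).lipschitzOnWith_of_nnnorm_hasDerivWithin_le
        (f' := fun z => auxF m lam x z p * (-Complex.I * (freqOmega m p : ℂ)))
        (fun z hz => (auxF_hasDerivAt m lam x p z).hasDerivWithinAt) (fun z hz => ?_)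
      rw [← NNReal.coe_le_coe, coe_nnnorm, Real.coe_nnabs, abs_of_nonneg (hbound_nonneg p)]
      exact hb1 z hz p
    have hboundint : Integrable bound volume := by
      rw [hbdef]; exact (gauss_integrable hlam).const_mul K
    have hdiff : ∀ᵐ p : EuclideanSpace ℝ (Fin 3) ∂volume,
        HasDerivAt (fun z => auxF m lam x z p)
          (auxF m lam x z₀ p * (-Complex.I * (freqOmega m p : ℂ))) z₀ :=
      Filter.Eventually.of_forall fun p => auxF_hasDerivAt m lam x p z₀
    obtain ⟨-, hder⟩ := hasDerivAt_integral_of_dominated_loc_of_lip (Metric.ball_mem_nhds z₀ one_pos)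
      hFmeas hFint hF'meas hlip hboundint hdiff
    exact hder.differentiableAt
  have heq : (fun z : ℂ => DeltaPlusLam m lam z x) =
      fun z : ℂ => ((2 * π : ℂ) ^ 3)⁻¹ * ∫ p : EuclideanSpace ℝ (Fin 3), auxF m lam x z p := rfl
  rw [heq]
  exact main.const_mul _
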